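/- Assume lim_{τ→0} ν(τ) = 0. Let ξ : Ω → V be locally absolutely continuous with derivative ξ' ∈ L²_ν(Ω;V). Then lim_{τ→0} ν(τ)‖ξ(τ)‖²_V = 0. In fact, for every τ₀ ∈ Ω one has limsup_{τ→0} ν(τ)‖ξ(τ)‖²_V ≤ 2τ₀ ∫₀^ℓ ν(s)‖ξ'(s)‖²_V ds. -/

import Mathlib

open MeasureTheory Set Filter

/-- Assume `ν(τ) = 1/μ(τ) → 0` as `τ → 0⁺`. If `ξ` is locally absolutely
continuous on `Ω` with derivative `ξ' ∈ L²_ν(Ω;V)`, then `ν(τ)‖ξ(τ)‖² → 0` as `τ → 0⁺`;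
in fact for every `τ₀ ∈ Ω`,
`limsup_{τ→0} ν(τ)‖ξ(τ)‖² ≤ 2 τ₀ ∫₀^ℓ ν(s)‖ξ'(s)‖² ds`. -/
theorem stmt6
    {V : Type*} [NormedAddCommGroup V] [InnerProductSpace ℝ V] [CompleteSpace V]
    (ℓ : EReal) (hℓ : 0 < ℓ)
    (Ω : Set ℝ) (hΩ : Ω = {s : ℝ | 0 < s ∧ (s : EReal) < ℓ})
    (μ : ℝ → ℝ)
    (hμpos : ∀ s ∈ Ω, 0 < μ s)
    (hμmono : AntitoneOn μ Ω)
    (hμint : IntegrableOn μ Ω)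
    (hν0 : Tendsto (fun τ => (μ τ)⁻¹) (nhdsWithin 0 Ω) (nhds 0))
    (ξ ξ' : ℝ → V)
    (hξ'loc : ∀ a b : ℝ, a ∈ Ω → b ∈ Ω → IntegrableOn ξ' (Icc a b))
    (hFTC : ∀ a b : ℝ, a ∈ Ω → b ∈ Ω → a ≤ b → ξ b = ξ a + ∫ s in a..b, ξ' s)
    (hξ'L2 : IntegrableOn (fun s => (μ s)⁻¹ * ‖ξ' s‖ ^ 2) Ω) :
    Tendsto (fun τ => (μ τ)⁻¹ * ‖ξ τ‖ ^ 2) (nhdsWithin 0 Ω) (nhds 0) ∧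
      ∀ τ₀ ∈ Ω,
        Filter.limsup (fun τ => (μ τ)⁻¹ * ‖ξ τ‖ ^ 2) (nhdsWithin 0 Ω) ≤
          2 * τ₀ * ∫ s in Ω, (μ s)⁻¹ * ‖ξ' s‖ ^ 2 := by
  -- Basic setup
  obtain ⟨r, hr0, hrℓ⟩ : ∃ x : ℝ, (0 : EReal) < x ∧ (x : EReal) < ℓ :=
    EReal.lt_iff_exists_real_btwn.1 hℓ
  have hr0' : (0 : ℝ) < r := by exact_mod_cast hr0
  have hrΩ : r ∈ Ω := by rw [hΩ]; exact ⟨hr0', hrℓ⟩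
  have hΩopen : IsOpen Ω := by
    rw [hΩ]
    have : {s : ℝ | 0 < s ∧ (s : EReal) < ℓ}
        = Ioi 0 ∩ ((fun s : ℝ => (s : EReal)) ⁻¹' Iio ℓ) := rfl
    rw [this]
    exact isOpen_Ioi.inter (isOpen_Iio.preimage continuous_coe_real_ereal)
  have hΩmeas : MeasurableSet Ω := hΩopen.measurableSet
  set I : ℝ := ∫ s in Ω, (μ s)⁻¹ * ‖ξ' s‖ ^ 2 with hI
  have hI0 : 0 ≤ I :=
    setIntegral_nonneg hΩmeas fun s hs =>
      mul_nonneg (inv_nonneg.2 (hμpos s hs).le) (sq_nonneg _)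
  -- nhdsWithin 0 Ω is nontrivial
  haveI hNB : (nhdsWithin (0:ℝ) Ω).NeBot := by
    refine mem_closure_iff_nhdsWithin_neBot.1 ?_
    have hsub : Ioo (0:ℝ) r ⊆ Ω := by
      rintro s ⟨hs0, hsr⟩
      rw [hΩ]
      exact ⟨hs0, lt_of_le_of_lt (EReal.coe_le_coe_iff.2 hsr.le) hrℓ⟩
    refine closure_mono hsub ?_
    rw [closure_Ioo hr0'.ne]
    exact ⟨le_refl 0, hr0'.le⟩
  -- Ω is order-convex towards the right of any of its points
  have hIccsub : ∀ τ τ₀ : ℝ, τ ∈ Ω → τ₀ ∈ Ω → Icc τ τ₀ ⊆ Ω := by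
    intro τ τ₀ hτ hτ₀ s hs
    rw [hΩ] at hτ hτ₀ ⊢
    exact ⟨lt_of_lt_of_le hτ.1 hs.1,
      lt_of_le_of_lt (EReal.coe_le_coe_iff.2 hs.2) hτ₀.2⟩
  -- Key pointwise estimate
  have key : ∀ τ₀ ∈ Ω, ∀ τ ∈ Ω, τ ≤ τ₀ →
      (μ τ)⁻¹ * ‖ξ τ‖ ^ 2 ≤ 2 * (μ τ)⁻¹ * ‖ξ τ₀‖ ^ 2 + 2 * τ₀ * I := by
    intro τ₀ hτ₀ τ hτ hττ₀
    have hτpos : 0 < τ := by rw [hΩ] at hτ; exact hτ.1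
    have hτ₀pos : 0 < τ₀ := lt_of_lt_of_le hτpos hττ₀
    have hsubI : Ioc τ τ₀ ⊆ Ω := fun s hs =>
      hIccsub τ τ₀ hτ hτ₀ ⟨hs.1.le, hs.2⟩
    have hμτ : 0 < μ τ := hμpos τ hτ
    set A : ℝ := ∫ s in Ioc τ τ₀, ‖ξ' s‖ with hA
    have hξ'int : IntegrableOn ξ' (Ioc τ τ₀) :=
      (hξ'loc τ τ₀ hτ hτ₀).mono_set Ioc_subset_Icc_self
    have hA0 : 0 ≤ A := setIntegral_nonneg measurableSet_Ioc fun s _ => norm_nonneg _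
    -- Step 1: ‖ξ τ‖ ≤ ‖ξ τ₀‖ + A
    have h1 : ‖ξ τ‖ ≤ ‖ξ τ₀‖ + A := by
      have hb := hFTC τ τ₀ hτ hτ₀ hττ₀
      have : ξ τ = ξ τ₀ - ∫ s in τ..τ₀, ξ' s := by rw [hb]; abel
      rw [this]
      calc ‖ξ τ₀ - ∫ s in τ..τ₀, ξ' s‖ ≤ ‖ξ τ₀‖ + ‖∫ s in τ..τ₀, ξ' s‖ :=
            norm_sub_le _ _
        _ ≤ ‖ξ τ₀‖ + A := by
            gcongr
            refine le_trans (intervalIntegral.norm_integral_le_integral_norm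
              (f := ξ') (μ := volume) (a := τ) (b := τ₀) hττ₀) (le_of_eq ?_)
            rw [hA, intervalIntegral.integral_of_le hττ₀]
    -- Step 2: Cauchy-Schwarz : A ^ 2 ≤ (∫ μ) * (∫ ν ‖ξ'‖²) on Ioc τ τ₀
    have hμIoc : IntegrableOn μ (Ioc τ τ₀) := hμint.mono_set hsubI
    have hL2Ioc : IntegrableOn (fun s => (μ s)⁻¹ * ‖ξ' s‖ ^ 2) (Ioc τ τ₀) :=
      hξ'L2.mono_set hsubI
    set f : ℝ → ℝ := fun s => Real.sqrt (μ s) with hf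
    set g : ℝ → ℝ := fun s => Real.sqrt ((μ s)⁻¹) * ‖ξ' s‖ with hg
    have hμae : AEStronglyMeasurable μ (volume.restrict (Ioc τ τ₀)) :=
      hμIoc.aestronglyMeasurable
    have hfm : AEStronglyMeasurable f (volume.restrict (Ioc τ τ₀)) :=
      Real.continuous_sqrt.comp_aestronglyMeasurable hμae
    have hgm : AEStronglyMeasurable g (volume.restrict (Ioc τ τ₀)) := by
      refine AEStronglyMeasurable.mul ?_ hξ'int.aestronglyMeasurable.norm
      exact (Real.continuous_sqrt.measurable.comp_aemeasurable
        hμae.aemeasurable.inv).aestronglyMeasurable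
    have hposIoc : ∀ s ∈ Ioc τ τ₀, 0 < μ s := fun s hs => hμpos s (hsubI hs)
    have hfsq : ∀ᵐ s ∂(volume.restrict (Ioc τ τ₀)),
        f s ^ 2 = μ s := by
      refine (ae_restrict_iff' measurableSet_Ioc).2 (Eventually.of_forall ?_)
      intro s hs
      exact Real.sq_sqrt (hposIoc s hs).le
    have hgsq : ∀ᵐ s ∂(volume.restrict (Ioc τ τ₀)),
        g s ^ 2 = (μ s)⁻¹ * ‖ξ' s‖ ^ 2 := by
      refine (ae_restrict_iff' measurableSet_Ioc).2 (Eventually.of_forall ?_)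
      intro s hs
      simp only [hg, mul_pow]
      rw [Real.sq_sqrt (inv_nonneg.2 (hposIoc s hs).le)]
    have hfsqint : Integrable (fun s => f s ^ 2) (volume.restrict (Ioc τ τ₀)) :=
      hμIoc.congr (hfsq.mono fun s hs => hs.symm)
    have hgsqint : Integrable (fun s => g s ^ 2) (volume.restrict (Ioc τ τ₀)) :=
      hL2Ioc.congr (hgsq.mono fun s hs => hs.symm)
    have hfLp : MemLp f (ENNReal.ofReal 2) (volume.restrict (Ioc τ τ₀)) := by
      rw [show ENNReal.ofReal 2 = 2 by norm_num]
      exact (memLp_two_iff_integrable_sq hfm).2 hfsqint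
    have hgLp : MemLp g (ENNReal.ofReal 2) (volume.restrict (Ioc τ τ₀)) := by
      rw [show ENNReal.ofReal 2 = 2 by norm_num]
      exact (memLp_two_iff_integrable_sq hgm).2 hgsqint
    have hCS := MeasureTheory.integral_mul_le_Lp_mul_Lq_of_nonneg
      Real.HolderConjugate.two_two (μ := volume.restrict (Ioc τ τ₀))
      (Eventually.of_forall fun s => Real.sqrt_nonneg _)
      (Eventually.of_forall fun s => mul_nonneg (Real.sqrt_nonneg _) (norm_nonneg _))
      hfLp hgLp
    set X : ℝ := ∫ s in Ioc τ τ₀, μ s with hX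
    set Y : ℝ := ∫ s in Ioc τ τ₀, (μ s)⁻¹ * ‖ξ' s‖ ^ 2 with hY
    have hX0 : 0 ≤ X := setIntegral_nonneg measurableSet_Ioc
      fun s hs => (hposIoc s hs).le
    have hY0 : 0 ≤ Y := setIntegral_nonneg measurableSet_Ioc
      fun s hs => mul_nonneg (inv_nonneg.2 (hposIoc s hs).le) (sq_nonneg _)
    have hAfg : A = ∫ s in Ioc τ τ₀, f s * g s := by
      refine setIntegral_congr_fun measurableSet_Ioc ?_
      intro s hs
      have h := hposIoc s hs
      simp only [hf, hg]
      rw [← mul_assoc, Real.sqrt_inv, mul_inv_cancel₀ (Real.sqrt_ne_zero'.2 h)]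
      ring
    have hXeq : (∫ s in Ioc τ τ₀, f s ^ (2:ℝ)) = X := by
      rw [hX]
      refine integral_congr_ae ?_
      filter_upwards [hfsq] with s hs
      rw [Real.rpow_two, hs]
    have hYeq : (∫ s in Ioc τ τ₀, g s ^ (2:ℝ)) = Y := by
      rw [hY]
      refine integral_congr_ae ?_
      filter_upwards [hgsq] with s hs
      rw [Real.rpow_two, hs]
    rw [← hAfg, hXeq, hYeq] at hCS
    have hAle : A ≤ Real.sqrt X * Real.sqrt Y := by
      rw [Real.sqrt_eq_rpow, Real.sqrt_eq_rpow]; exact hCS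
    have hAsq : A ^ 2 ≤ X * Y := by
      calc A ^ 2 ≤ (Real.sqrt X * Real.sqrt Y) ^ 2 := by
            exact pow_le_pow_left₀ hA0 hAle 2
        _ = X * Y := by
            rw [mul_pow, Real.sq_sqrt hX0, Real.sq_sqrt hY0]
    -- Step 3: X ≤ μ τ * τ₀ and Y ≤ I
    have hXle : X ≤ μ τ * τ₀ := by
      have h1 : X ≤ ∫ _s in Ioc τ τ₀, μ τ := by
        refine setIntegral_mono_on hμIoc ((integrableOn_const_iff (by simp)).2 (Or.inr ?_))
          measurableSet_Ioc ?_
        · rw [Real.volume_Ioc]; exact ENNReal.ofReal_lt_top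
        · intro s hs
          exact hμmono hτ (hsubI hs) hs.1.le
      have h2 : (∫ _s in Ioc τ τ₀, μ τ) = (τ₀ - τ) * μ τ := by
        rw [setIntegral_const, Real.volume_real_Ioc_of_le (by linarith), smul_eq_mul]
      calc X ≤ (τ₀ - τ) * μ τ := h1.trans_eq h2
        _ ≤ τ₀ * μ τ := by nlinarith
        _ = μ τ * τ₀ := mul_comm _ _
    have hYle : Y ≤ I := by
      refine setIntegral_mono_set hξ'L2 ?_ (HasSubset.Subset.eventuallyLE hsubI)
      refine (ae_restrict_iff' hΩmeas).2 (Eventually.of_forall ?_)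
      intro s hs
      exact mul_nonneg (inv_nonneg.2 (hμpos s hs).le) (sq_nonneg _)
    -- conclusion
    have hAsq' : A ^ 2 ≤ μ τ * τ₀ * I := by
      calc A ^ 2 ≤ X * Y := hAsq
        _ ≤ (μ τ * τ₀) * I := by
            apply mul_le_mul hXle hYle hY0
            positivity
    have hsq : ‖ξ τ‖ ^ 2 ≤ 2 * ‖ξ τ₀‖ ^ 2 + 2 * A ^ 2 := by
      nlinarith [norm_nonneg (ξ τ), norm_nonneg (ξ τ₀), sq_nonneg (‖ξ τ₀‖ - A)]
    have hνττ : (μ τ)⁻¹ * (μ τ * τ₀ * I) = τ₀ * I := by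
      field_simp
    have hν : (0:ℝ) ≤ (μ τ)⁻¹ := inv_nonneg.2 hμτ.le
    calc (μ τ)⁻¹ * ‖ξ τ‖ ^ 2 ≤ (μ τ)⁻¹ * (2 * ‖ξ τ₀‖ ^ 2 + 2 * A ^ 2) := by
          exact mul_le_mul_of_nonneg_left hsq hν
      _ = 2 * (μ τ)⁻¹ * ‖ξ τ₀‖ ^ 2 + 2 * ((μ τ)⁻¹ * A ^ 2) := by ring
      _ ≤ 2 * (μ τ)⁻¹ * ‖ξ τ₀‖ ^ 2 + 2 * (τ₀ * I) := by
          have hc : (μ τ)⁻¹ * A ^ 2 ≤ τ₀ * I :=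
            le_trans (mul_le_mul_of_nonneg_left hAsq' hν) (le_of_eq hνττ)
          linarith
      _ = 2 * (μ τ)⁻¹ * ‖ξ τ₀‖ ^ 2 + 2 * τ₀ * I := by ring
  -- Eventual bound for each τ₀ ∈ Ω
  have hevkey : ∀ τ₀ ∈ Ω, ∀ᶠ τ in nhdsWithin 0 Ω,
      (μ τ)⁻¹ * ‖ξ τ‖ ^ 2 ≤ 2 * (μ τ)⁻¹ * ‖ξ τ₀‖ ^ 2 + 2 * τ₀ * I := by
    intro τ₀ hτ₀
    have hτ₀pos : 0 < τ₀ := by rw [hΩ] at hτ₀; exact hτ₀.1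
    have h1 : ∀ᶠ τ in nhdsWithin 0 Ω, τ ≤ τ₀ :=
      eventually_nhdsWithin_of_eventually_nhds (eventually_le_nhds hτ₀pos)
    have h2 : ∀ᶠ τ in nhdsWithin 0 Ω, τ ∈ Ω := eventually_mem_nhdsWithin
    filter_upwards [h1, h2] with τ hle hmem
    exact key τ₀ hτ₀ τ hmem hle
  have hev0 : ∀ᶠ τ in nhdsWithin 0 Ω, 0 ≤ (μ τ)⁻¹ * ‖ξ τ‖ ^ 2 := by
    filter_upwards [eventually_mem_nhdsWithin] with τ hmem
    exact mul_nonneg (inv_nonneg.2 (hμpos τ hmem).le) (sq_nonneg _)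
  constructor
  · -- the limit
    rw [tendsto_order]
    constructor
    · intro a ha
      filter_upwards [hev0] with τ h
      exact lt_of_lt_of_le ha h
    · intro ε hε
      -- choose a small τ₀
      set τ₀ : ℝ := min r (ε / (4 * (I + 1))) with hτ₀def
      have hτ₀pos : 0 < τ₀ := lt_min hr0' (by positivity)
      have hτ₀Ω : τ₀ ∈ Ω := by
        rw [hΩ]
        refine ⟨hτ₀pos, lt_of_le_of_lt (EReal.coe_le_coe_iff.2 (min_le_left _ _)) hrℓ⟩
      have hsmall : 2 * τ₀ * I < ε / 2 := by
        have h1 : τ₀ ≤ ε / (4 * (I + 1)) := min_le_right _ _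
        have h2 : 2 * τ₀ * I ≤ 2 * (ε / (4 * (I + 1))) * I := by
          apply mul_le_mul_of_nonneg_right _ hI0
          linarith
        have h3 : 2 * (ε / (4 * (I + 1))) * I < ε / 2 := by
          have hI1 : (0:ℝ) < I + 1 := by linarith
          have heq : 2 * (ε / (4 * (I + 1))) * I = ε * I / (2 * (I + 1)) := by
            field_simp
            ring
          rw [heq, div_lt_iff₀ (by positivity)]
          nlinarith
        linarith
      have htend : Tendsto (fun τ => 2 * (μ τ)⁻¹ * ‖ξ τ₀‖ ^ 2)
          (nhdsWithin 0 Ω) (nhds 0) := by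
        have := (hν0.const_mul 2).mul_const (‖ξ τ₀‖ ^ 2)
        simpa using this
      have hevs : ∀ᶠ τ in nhdsWithin 0 Ω,
          2 * (μ τ)⁻¹ * ‖ξ τ₀‖ ^ 2 < ε / 2 :=
        htend.eventually (eventually_lt_nhds (by positivity))
      filter_upwards [hevkey τ₀ hτ₀Ω, hevs] with τ h1 h2
      calc (μ τ)⁻¹ * ‖ξ τ‖ ^ 2 ≤ 2 * (μ τ)⁻¹ * ‖ξ τ₀‖ ^ 2 + 2 * τ₀ * I := h1
        _ < ε / 2 + ε / 2 := by linarith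
        _ = ε := by ring
  · -- the limsup bound
    intro τ₀ hτ₀
    have htend : Tendsto (fun τ => 2 * (μ τ)⁻¹ * ‖ξ τ₀‖ ^ 2 + 2 * τ₀ * I)
        (nhdsWithin 0 Ω) (nhds (2 * τ₀ * I)) := by
      have h1 : Tendsto (fun τ => 2 * (μ τ)⁻¹ * ‖ξ τ₀‖ ^ 2)
          (nhdsWithin 0 Ω) (nhds 0) := by
        have := (hν0.const_mul 2).mul_const (‖ξ τ₀‖ ^ 2)
        simpa using this
      have := h1.add_const (2 * τ₀ * I)
      simpa using this
    have hbdd : IsBoundedUnder (· ≤ ·) (nhdsWithin 0 Ω)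
        (fun τ => 2 * (μ τ)⁻¹ * ‖ξ τ₀‖ ^ 2 + 2 * τ₀ * I) :=
      htend.isBoundedUnder_le
    have hcobdd : IsCoboundedUnder (· ≤ ·) (nhdsWithin 0 Ω)
        (fun τ => (μ τ)⁻¹ * ‖ξ τ‖ ^ 2) :=
      isCoboundedUnder_le_of_eventually_le _ hev0
    calc Filter.limsup (fun τ => (μ τ)⁻¹ * ‖ξ τ‖ ^ 2) (nhdsWithin 0 Ω)
        ≤ Filter.limsup (fun τ => 2 * (μ τ)⁻¹ * ‖ξ τ₀‖ ^ 2 + 2 * τ₀ * I)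
          (nhdsWithin 0 Ω) :=
          limsup_le_limsup (hevkey τ₀ hτ₀) hcobdd hbdd
      _ = 2 * τ₀ * I := htend.limsup_eq
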